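/- For measurable Hilbert bundles T_1, T_2 over X, the tensor product of Hilbert section modules equals the sections of the tensor bundle: Γ(T_1) ⊗ Γ(T_2) is isometrically isomorphic to Γ(T_1 ⊗ T_2); in particular, the dimensional decomposition (E_k) of Γ(T_1)⊗Γ(T_2) is given by E_k = ∪_{nm=k} (E_n^1 ∩ E_m^2), and the pointwise norm satisfies |s^1 ⊗ s^2| = |s^1||s^2| m-a.e. -/

import Mathlib

open MeasureTheory Filter

namespace L0SerreSwan

/-- A measurable Banach bundle over `(X,d,m)`: a Borel partition `(E_n)_{n∈ℕ}` of `X`,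
with total space `⊔ₙ Eₙ × ℝⁿ`, together with a measurable function `nrm` assigning to
`m`-a.e. point `x ∈ E_n` a norm `nrm n x ·` on the fiber `ℝⁿ`. -/
structure MBB (X : Type*) [MeasurableSpace X] (μ : MeasureTheory.Measure X) where
  E : ℕ → Set X
  measE : ∀ n, MeasurableSet (E n)
  disjE : ∀ n m, n ≠ m → Disjoint (E n) (E m)
  unionE : (⋃ n, E n) = Set.univ
  nrm : (n : ℕ) → X → (Fin n → ℝ) → ℝ
  meas_nrm : ∀ n, Measurable (fun p : X × (Fin n → ℝ) => nrm n p.1 p.2)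
  nrm_nonneg : ∀ n, ∀ᵐ x ∂μ, x ∈ E n → ∀ v, 0 ≤ nrm n x v
  nrm_definite : ∀ n, ∀ᵐ x ∂μ, x ∈ E n → ∀ v, nrm n x v = 0 → v = 0
  nrm_smul : ∀ n, ∀ᵐ x ∂μ, x ∈ E n → ∀ (c : ℝ) (v), nrm n x (c • v) = |c| * nrm n x v
  nrm_triangle : ∀ n, ∀ᵐ x ∂μ, x ∈ E n → ∀ v w, nrm n x (v + w) ≤ nrm n x v + nrm n x w

variable {X : Type*} [MeasurableSpace X] {μ : MeasureTheory.Measure X}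

/-- A measurable section of a measurable Banach bundle, recorded by its values
`val n x ∈ ℝⁿ` (only the values for `x ∈ E_n` are relevant). -/
structure Sec (B : MBB X μ) where
  val : (n : ℕ) → X → Fin n → ℝ
  meas : ∀ n, Measurable (val n)

/-- Two sections agree `m`-a.e. (fiberwise, on each piece of the partition). -/
def Sec.aeeq (B : MBB X μ) (s t : Sec B) : Prop :=
  ∀ n, ∀ᵐ x ∂μ, x ∈ B.E n → s.val n x = t.val n x

/-- Pointwise sum of sections. -/
def Sec.add {B : MBB X μ} (s t : Sec B) : Sec B :=
  ⟨fun n x i => s.val n x i + t.val n x i, fun n =>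
    measurable_pi_lambda _ fun i =>
      ((measurable_pi_apply i).comp (s.meas n)).add
        ((measurable_pi_apply i).comp (t.meas n))⟩

/-- Pointwise difference of sections. -/
def Sec.sub {B : MBB X μ} (s t : Sec B) : Sec B :=
  ⟨fun n x i => s.val n x i - t.val n x i, fun n =>
    measurable_pi_lambda _ fun i =>
      ((measurable_pi_apply i).comp (s.meas n)).sub
        ((measurable_pi_apply i).comp (t.meas n))⟩

/-- Multiplication of a section by a (Borel representative of an) `L⁰` function. -/
def Sec.smul {B : MBB X μ} (g : X → ℝ) (hg : Measurable g) (s : Sec B) : Sec B :=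
  ⟨fun n x i => g x * s.val n x i, fun n =>
    measurable_pi_lambda _ fun i =>
      hg.mul ((measurable_pi_apply i).comp (s.meas n))⟩

/-- The pointwise norm `|s|(x) = nrm(s(x))` of a section. -/
noncomputable def ptNorm (B : MBB X μ) (s : Sec B) : X → ℝ :=
  fun x => ∑' n, (B.E n).indicator (fun y => B.nrm n y (s.val n y)) x

/-- The distance `d(s,t) = ∫ |s-t| ∧ 1 dm'` on sections. -/
noncomputable def secDist (B : MBB X μ) (m' : MeasureTheory.Measure X) (s t : Sec B) : ℝ :=
  ∫ x, min (ptNorm B (s.sub t) x) 1 ∂m'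

/-- The constant section associated to a vector `q ∈ ℝⁿ`: it equals `q` on `E_n` and
vanishes on the other pieces of the partition. -/
def constSec (B : MBB X μ) (n : ℕ) (q : Fin n → ℝ) : Sec B :=
  ⟨fun k _x i => if h : k = n then q (Fin.cast h i) else 0,
   fun _k => measurable_const⟩

/-- A finite `L⁰`-linear combination `∑ᵢ gᵢ • uᵢ` of sections. -/
def lincomb {B : MBB X μ} {k : ℕ} (g : Fin k → X → ℝ) (hg : ∀ i, Measurable (g i))
    (u : Fin k → Sec B) : Sec B :=
  ⟨fun n x j => ∑ i, g i x * (u i).val n x j, fun n =>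
    measurable_pi_lambda _ fun j =>
      Finset.measurable_sum _ fun i _ =>
        (hg i).mul ((measurable_pi_apply j).comp ((u i).meas n))⟩

/-- The elementary tensor `s₁ ⊗ s₂` of sections of two bundles `B₁`, `B₂`, as a section
of a tensor bundle `B`: over a point of `E¹_n ∩ E²_m` (contained in the piece of `B` of
fiber dimension `n·m`) its coordinates are the products of the coordinates of `s₁` and
`s₂`, via the identification `ℝ^(n·m) ≃ ℝⁿ ⊗ ℝᵐ`. -/
noncomputable def tensSec (B₁ B₂ B : MBB X μ) (s₁ : Sec B₁) (s₂ : Sec B₂) : Sec B :=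
  ⟨fun k x p =>
    ∑ n ∈ Finset.range (k + 1), ∑ m ∈ Finset.range (k + 1),
      if h : n * m = k then
        (B₁.E n ∩ B₂.E m).indicator
          (fun y =>
            s₁.val n y (finProdFinEquiv.symm (Fin.cast h.symm p)).1 *
              s₂.val m y (finProdFinEquiv.symm (Fin.cast h.symm p)).2) x
      else 0,
   fun k => measurable_pi_lambda _ fun p => by
    apply Finset.measurable_sum; intro n _
    apply Finset.measurable_sum; intro m _
    split_ifs with h
    · exact Measurable.indicator
        (((measurable_pi_apply _).comp (s₁.meas n)).mul
          ((measurable_pi_apply _).comp (s₂.meas m)))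
        ((B₁.measE n).inter (B₂.measE m))
    · exact measurable_const⟩

section Aux

lemma MBB.mem_uniq (B : MBB X μ) {x : X} {n m : ℕ} (h1 : x ∈ B.E n) (h2 : x ∈ B.E m) :
    n = m := by
  by_contra h
  exact Set.disjoint_left.mp (B.disjE n m h) h1 h2

lemma MBB.exists_mem (B : MBB X μ) (x : X) : ∃ n, x ∈ B.E n := by
  have : x ∈ ⋃ n, B.E n := by rw [B.unionE]; trivial
  exact Set.mem_iUnion.mp this

lemma ptNorm_eq (B : MBB X μ) (s : Sec B) {x : X} {n : ℕ} (hx : x ∈ B.E n) :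
    ptNorm B s x = B.nrm n x (s.val n x) := by
  unfold ptNorm
  rw [tsum_eq_single n fun k hk =>
    Set.indicator_of_notMem (fun hxk => hk (B.mem_uniq hxk hx)) _]
  exact Set.indicator_of_mem hx _

lemma ae_nrm_zero (B : MBB X μ) (n : ℕ) :
    ∀ᵐ x ∂μ, x ∈ B.E n → B.nrm n x 0 = 0 := by
  filter_upwards [B.nrm_smul n] with x h hx
  have := h hx 0 0
  simpa using this

lemma ae_ptNorm_nonneg (B : MBB X μ) (s : Sec B) : ∀ᵐ x ∂μ, 0 ≤ ptNorm B s x := by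
  filter_upwards [MeasureTheory.ae_all_iff.2 B.nrm_nonneg] with x hx
  apply tsum_nonneg
  intro k
  by_cases h : x ∈ B.E k
  · rw [Set.indicator_of_mem h]; exact hx k h _
  · rw [Set.indicator_of_notMem h]

lemma tensSec_val (B₁ B₂ B : MBB X μ) (s₁ : Sec B₁) (s₂ : Sec B₂) {x : X} {n m : ℕ}
    (h1 : x ∈ B₁.E n) (h2 : x ∈ B₂.E m) (p : Fin (n * m)) :
    (tensSec B₁ B₂ B s₁ s₂).val (n * m) x p =
      s₁.val n x (finProdFinEquiv.symm p).1 * s₂.val m x (finProdFinEquiv.symm p).2 := by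
  have hk : 0 < n * m := p.pos
  have hn : 0 < n := Nat.pos_of_ne_zero (fun h => by simp [h] at hk)
  have hm : 0 < m := Nat.pos_of_ne_zero (fun h => by simp [h] at hk)
  show (∑ n' ∈ Finset.range (n * m + 1), ∑ m' ∈ Finset.range (n * m + 1), _) = _
  rw [Finset.sum_eq_single n]
  · rw [Finset.sum_eq_single m]
    · rw [dif_pos rfl, Set.indicator_of_mem (show x ∈ B₁.E n ∩ B₂.E m from ⟨h1, h2⟩)]
      rfl
    · intro b _ hb
      split_ifs with h
      · exact Set.indicator_of_notMem (fun hx => hb (B₂.mem_uniq hx.2 h2)) _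
      · rfl
    · intro hm'
      exact absurd (Finset.mem_range.2 (Nat.lt_succ_of_le (Nat.le_mul_of_pos_left m hn))) hm'
  · intro b _ hb
    apply Finset.sum_eq_zero
    intro c _
    split_ifs with h
    · exact Set.indicator_of_notMem (fun hx => hb (B₁.mem_uniq hx.1 h1)) _
    · rfl
  · intro hn'
    exact absurd (Finset.mem_range.2 (Nat.lt_succ_of_le (Nat.le_mul_of_pos_right n hm))) hn'

/-- Index type for the approximating finite linear combination. -/
abbrev TIdx (N : ℕ) : Type := Σ q : Fin N × Fin N, Fin (q.1 : ℕ) × Fin (q.2 : ℕ)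

/-- The coefficient functions. -/
noncomputable def tG (B₁ B₂ B : MBB X μ) (t : Sec B) {N : ℕ} (a : TIdx N) : X → ℝ :=
  (B₁.E a.1.1 ∩ B₂.E a.1.2).indicator
    (fun y => t.val ((a.1.1 : ℕ) * (a.1.2 : ℕ)) y (finProdFinEquiv (a.2.1, a.2.2)))

lemma tG_meas (B₁ B₂ B : MBB X μ) (t : Sec B) {N : ℕ} (a : TIdx N) :
    Measurable (tG B₁ B₂ B t a) :=
  Measurable.indicator ((measurable_pi_apply _).comp (t.meas _))
    ((B₁.measE _).inter (B₂.measE _))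

/-- First constant sections. -/
noncomputable def tU₁ (B₁ : MBB X μ) {N : ℕ} (a : TIdx N) : Sec B₁ :=
  constSec B₁ (a.1.1 : ℕ) (Pi.single a.2.1 1)

/-- Second constant sections. -/
noncomputable def tU₂ (B₂ : MBB X μ) {N : ℕ} (a : TIdx N) : Sec B₂ :=
  constSec B₂ (a.1.2 : ℕ) (Pi.single a.2.2 1)

lemma constSec_val (B : MBB X μ) (k n : ℕ) (q : Fin n → ℝ) (x : X) (a : Fin k) :
    (constSec B n q).val k x a = if h : k = n then q (Fin.cast h a) else 0 := rfl

lemma key_sum (B₁ B₂ B : MBB X μ) (t : Sec B) {N n m : ℕ} (hn : n < N) (hm : m < N)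
    {x : X} (h1 : x ∈ B₁.E n) (h2 : x ∈ B₂.E m) (p : Fin (n * m)) :
    (∑ a : TIdx N, tG B₁ B₂ B t a x *
        (tensSec B₁ B₂ B (tU₁ B₁ a) (tU₂ B₂ a)).val (n * m) x p) =
      t.val (n * m) x p := by
  obtain ⟨⟨u, v⟩, h⟩ : ∃ q : Fin n × Fin m, finProdFinEquiv.symm p = q := ⟨_, rfl⟩
  have hp : finProdFinEquiv (u, v) = p := by
    rw [← h]; exact finProdFinEquiv.apply_symm_apply p
  have hrw : ∀ a : TIdx N,
      (tensSec B₁ B₂ B (tU₁ B₁ a) (tU₂ B₂ a)).val (n * m) x p =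
        (tU₁ B₁ a).val n x u * (tU₂ B₂ a).val m x v := by
    intro a
    rw [tensSec_val B₁ B₂ B _ _ h1 h2 p, h]
  simp only [hrw]
  rw [Fintype.sum_eq_single (⟨(⟨n, hn⟩, ⟨m, hm⟩), (u, v)⟩ : TIdx N)]
  · show (B₁.E n ∩ B₂.E m).indicator
        (fun y => t.val (n * m) y (finProdFinEquiv (u, v))) x *
        ((constSec B₁ n (Pi.single u 1)).val n x u *
          (constSec B₂ m (Pi.single v 1)).val m x v) = t.val (n * m) x p
    rw [Set.indicator_of_mem (show x ∈ B₁.E n ∩ B₂.E m from ⟨h1, h2⟩),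
      constSec_val, constSec_val, dif_pos rfl, dif_pos rfl,
      show Fin.cast (rfl : n = n) u = u from rfl,
      show Fin.cast (rfl : m = m) v = v from rfl,
      Pi.single_eq_same, Pi.single_eq_same, hp]
    ring
  · rintro ⟨⟨n', m'⟩, i, j⟩ hne
    by_cases hx' : x ∈ B₁.E n' ∩ B₂.E m'
    · have hn' : n' = (⟨n, hn⟩ : Fin N) := Fin.ext (B₁.mem_uniq hx'.1 h1)
      have hm' : m' = (⟨m, hm⟩ : Fin N) := Fin.ext (B₂.mem_uniq hx'.2 h2)
      subst hn' hm'
      show _ * ((constSec B₁ n (Pi.single i 1)).val n x u *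
          (constSec B₂ m (Pi.single j 1)).val m x v) = 0
      rw [constSec_val, constSec_val, dif_pos rfl, dif_pos rfl,
        show Fin.cast (rfl : n = n) u = u from rfl,
        show Fin.cast (rfl : m = m) v = v from rfl]
      rcases eq_or_ne u i with hu' | hu'
      · rcases eq_or_ne v j with hv' | hv'
        · exact absurd (by rw [← hu', ← hv'] :
            (⟨(⟨n, hn⟩, ⟨m, hm⟩), (i, j)⟩ : TIdx N) = ⟨(⟨n, hn⟩, ⟨m, hm⟩), (u, v)⟩).symm
            (Ne.symm hne)
        · rw [Pi.single_apply j 1 v, if_neg hv']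
          ring
      · rw [Pi.single_apply i 1 u, if_neg hu']
        ring
    · show tG B₁ B₂ B t ⟨(n', m'), (i, j)⟩ x * _ = 0
      rw [tG, Set.indicator_of_notMem hx']
      ring

end Aux

/-- **Tensor products of Hilbert section modules.** Let `T₁`, `T₂` be measurable Hilbert
bundles over a metric measure space `(X,d,m)` (fiber norms satisfying the parallelogram
identity a.e.), and let `T = T₁ ⊗ T₂` be the tensor-product bundle: its partition is
`E_k = ⋃_{nm=k} E¹_n ∩ E²_m` (which is thus the dimensional decomposition of
`Γ(T₁) ⊗ Γ(T₂)`), its fibers are Hilbertian, and its norm factorizes on elementary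
tensors. Then `Γ(T₁) ⊗ Γ(T₂) = Γ(T₁ ⊗ T₂)`: the elementary tensor map is a pointwise
isometry, `|s¹ ⊗ s²| = |s¹| |s²|` m-a.e., and the `L⁰(m)`-linear span of elementary
tensors is dense in `Γ(T₁ ⊗ T₂)`. -/
theorem tensor_product_of_hilbert_sections
    {X : Type*} [MetricSpace X] [CompleteSpace X] [SecondCountableTopology X]
    [MeasurableSpace X] [BorelSpace X]
    (μ : Measure X) [IsLocallyFiniteMeasure μ] (hμ : μ ≠ 0)
    (m' : Measure X) [IsProbabilityMeasure m'] (h₁ : μ ≪ m') (h₂ : m' ≪ μ)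
    (B₁ B₂ B : MBB X μ)
    (hHilb₁ : ∀ n, ∀ᵐ x ∂μ, x ∈ B₁.E n → ∀ v w : Fin n → ℝ,
      B₁.nrm n x (v + w) ^ 2 + B₁.nrm n x (v - w) ^ 2 =
        2 * B₁.nrm n x v ^ 2 + 2 * B₁.nrm n x w ^ 2)
    (hHilb₂ : ∀ n, ∀ᵐ x ∂μ, x ∈ B₂.E n → ∀ v w : Fin n → ℝ,
      B₂.nrm n x (v + w) ^ 2 + B₂.nrm n x (v - w) ^ 2 =
        2 * B₂.nrm n x v ^ 2 + 2 * B₂.nrm n x w ^ 2)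
    (hHilb : ∀ n, ∀ᵐ x ∂μ, x ∈ B.E n → ∀ v w : Fin n → ℝ,
      B.nrm n x (v + w) ^ 2 + B.nrm n x (v - w) ^ 2 =
        2 * B.nrm n x v ^ 2 + 2 * B.nrm n x w ^ 2)
    (hE : ∀ k, B.E k = ⋃ (p : ℕ × ℕ) (_ : p.1 * p.2 = k), B₁.E p.1 ∩ B₂.E p.2)
    (hnrm : ∀ n m : ℕ, ∀ᵐ x ∂μ, x ∈ B₁.E n ∩ B₂.E m →
      ∀ (v : Fin n → ℝ) (w : Fin m → ℝ),
        B.nrm (n * m) x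
            (fun p => v (finProdFinEquiv.symm p).1 * w (finProdFinEquiv.symm p).2) =
          B₁.nrm n x v * B₂.nrm m x w) :
    -- the elementary tensor map is a pointwise isometry: `|s¹ ⊗ s²| = |s¹||s²|` m-a.e.
    (∀ (s₁ : Sec B₁) (s₂ : Sec B₂),
      (fun x => ptNorm B (tensSec B₁ B₂ B s₁ s₂) x) =ᵐ[μ]
        fun x => ptNorm B₁ s₁ x * ptNorm B₂ s₂ x) ∧
    -- the `L⁰(m)`-linear span of the elementary tensors is dense in `Γ(T₁ ⊗ T₂)`
    (∀ (t : Sec B) (ε : ℝ), 0 < ε →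
      ∃ (k : ℕ) (g : Fin k → X → ℝ) (hg : ∀ i, Measurable (g i))
        (s₁ : Fin k → Sec B₁) (s₂ : Fin k → Sec B₂),
        secDist B m' t (lincomb g hg fun i => tensSec B₁ B₂ B (s₁ i) (s₂ i)) < ε) := by
  classical
  have hEmem : ∀ {x : X} {n m : ℕ}, x ∈ B₁.E n → x ∈ B₂.E m → x ∈ B.E (n * m) := by
    intro x n m h1 h2
    rw [hE]
    exact Set.mem_iUnion.2 ⟨(n, m), Set.mem_iUnion.2 ⟨rfl, h1, h2⟩⟩
  constructor
  · -- pointwise isometry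
    intro s₁ s₂
    filter_upwards [ae_all_iff.2 fun n => ae_all_iff.2 fun m => hnrm n m] with x hx
    obtain ⟨n, hn⟩ := B₁.exists_mem x
    obtain ⟨m, hm⟩ := B₂.exists_mem x
    have hB : x ∈ B.E (n * m) := hEmem hn hm
    rw [ptNorm_eq B _ hB, ptNorm_eq B₁ s₁ hn, ptNorm_eq B₂ s₂ hm]
    have hv : (tensSec B₁ B₂ B s₁ s₂).val (n * m) x = fun p =>
        s₁.val n x (finProdFinEquiv.symm p).1 * s₂.val m x (finProdFinEquiv.symm p).2 := by
      funext p
      exact tensSec_val B₁ B₂ B s₁ s₂ hn hm p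
    rw [hv]
    exact hx n m ⟨hn, hm⟩ (s₁.val n x) (s₂.val m x)
  · -- density of the span of elementary tensors
    intro t ε hε
    set C : ℕ → Set X := fun N => ⋃ n < N, ⋃ m < N, (B₁.E n ∩ B₂.E m) with hCdef
    have hCmeas : ∀ N, MeasurableSet (C N) := fun N =>
      MeasurableSet.biUnion (Set.to_countable _) fun n _ =>
        MeasurableSet.biUnion (Set.to_countable _) fun m _ =>
          (B₁.measE n).inter (B₂.measE m)
    have hCmono : Monotone C := by
      intro a b hab x hx
      simp only [hCdef, Set.mem_iUnion] at hx ⊢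
      obtain ⟨n, hn, m, hm, h⟩ := hx
      exact ⟨n, lt_of_lt_of_le hn hab, m, lt_of_lt_of_le hm hab, h⟩
    have hCap : ⋂ N, (C N)ᶜ = ∅ := by
      rw [← Set.compl_iUnion, Set.compl_empty_iff]
      ext x
      simp only [hCdef, Set.mem_iUnion, Set.mem_univ, iff_true]
      obtain ⟨n, hn⟩ := B₁.exists_mem x
      obtain ⟨m, hm⟩ := B₂.exists_mem x
      exact ⟨max n m + 1, n, by omega, m, by omega, hn, hm⟩
    have htend : Tendsto (fun N => m' ((C N)ᶜ)) atTop (nhds 0) := by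
      have h := MeasureTheory.tendsto_measure_iInter_atTop (μ := m') (s := fun N => (C N)ᶜ)
        (fun N => ((hCmeas N).compl).nullMeasurableSet)
        (fun a b hab => Set.compl_subset_compl.2 (hCmono hab))
        ⟨0, measure_ne_top m' _⟩
      rw [hCap, measure_empty] at h
      exact h
    obtain ⟨N, hN⟩ :=
      (htend.eventually_lt_const (ENNReal.ofReal_pos.2 hε)).exists
    let e : Fin (Fintype.card (TIdx N)) ≃ TIdx N := (Fintype.equivFin (TIdx N)).symm
    let L : Sec B := lincomb (fun i => tG B₁ B₂ B t (e i))
      (fun i => tG_meas B₁ B₂ B t (e i))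
      (fun i => tensSec B₁ B₂ B (tU₁ B₁ (e i)) (tU₂ B₂ (e i)))
    refine ⟨Fintype.card (TIdx N), fun i => tG B₁ B₂ B t (e i),
      fun i => tG_meas B₁ B₂ B t (e i),
      fun i => tU₁ B₁ (e i), fun i => tU₂ B₂ (e i), ?_⟩
    show secDist B m' t L < ε
    have hae : ∀ᵐ x ∂μ, (x ∈ C N → min (ptNorm B (t.sub L) x) 1 = 0) ∧
        0 ≤ ptNorm B (t.sub L) x := by
      filter_upwards [ae_all_iff.2 (ae_nrm_zero B), ae_ptNorm_nonneg B (t.sub L)]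
        with x hz hnn
      refine ⟨fun hxC => ?_, hnn⟩
      simp only [hCdef, Set.mem_iUnion] at hxC
      obtain ⟨n, hnN, m, hmN, hx1, hx2⟩ := hxC
      have hB : x ∈ B.E (n * m) := hEmem hx1 hx2
      have h0 : (t.sub L).val (n * m) x = 0 := by
        funext p
        show t.val (n * m) x p -
          (∑ i, tG B₁ B₂ B t (e i) x *
            (tensSec B₁ B₂ B (tU₁ B₁ (e i)) (tU₂ B₂ (e i))).val (n * m) x p) = 0
        rw [Equiv.sum_comp e (fun a : TIdx N => tG B₁ B₂ B t a x *
            (tensSec B₁ B₂ B (tU₁ B₁ a) (tU₂ B₂ a)).val (n * m) x p),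
          key_sum B₁ B₂ B t hnN hmN hx1 hx2 p, sub_self]
      rw [ptNorm_eq B _ hB, h0, hz (n * m) hB]
      norm_num
    have haem' := hae.filter_mono h₂.ae_le
    have hle : secDist B m' t L ≤ (m' ((C N)ᶜ)).toReal := by
      have hint : Integrable (((C N)ᶜ).indicator fun _ => (1 : ℝ)) m' :=
        (integrable_const 1).indicator (hCmeas N).compl
      have h0le : 0 ≤ᵐ[m'] fun x => min (ptNorm B (t.sub L) x) 1 := by
        filter_upwards [haem'] with x hx
        exact le_min hx.2 one_pos.le
      have hfle : (fun x => min (ptNorm B (t.sub L) x) 1) ≤ᵐ[m']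
          ((C N)ᶜ).indicator fun _ => (1 : ℝ) := by
        filter_upwards [haem'] with x hx
        by_cases hxc : x ∈ C N
        · rw [hx.1 hxc]
          exact Set.indicator_nonneg (fun _ _ => zero_le_one) x
        · rw [Set.indicator_of_mem (Set.mem_compl hxc)]
          exact min_le_right _ _
      calc secDist B m' t L = ∫ x, min (ptNorm B (t.sub L) x) 1 ∂m' := rfl
        _ ≤ ∫ x, ((C N)ᶜ).indicator (fun _ => (1 : ℝ)) x ∂m' :=
            integral_mono_of_nonneg h0le hint hfle
        _ = (m' ((C N)ᶜ)).toReal := by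
            rw [integral_indicator_const (1 : ℝ) (hCmeas N).compl]; simp [measureReal_def]
    exact lt_of_le_of_lt hle (ENNReal.toReal_lt_of_lt_ofReal hN)

end L0SerreSwan
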